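/- arXiv:1405.2530 — 9 statements merged into one kernel-verified Lean document; each statement's English description precedes it below -/
import Mathlib

section
/- Let α be an assignment of jobs to machines whose makespan is at most 2T and whose average machine load equals L, where 0 < L ≤ T. Let γ ≥ 1 and let k = |Bad(α,γ)| be the number of machines whose load exceeds T + γ·L. Then k < m/(γ+1). -/
/-- The load of machine `i` under assignment `α`, with processing times `p i j`. -/
noncomputable def mload {Mach J : Type*} [Fintype J] [DecidableEq Mach]
    (p : Mach → J → ℝ) (α : J → Mach) (i : Mach) : ℝ :=
  ∑ j ∈ Finset.univ.filter (fun j => α j = i), p i j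

/-- If `α` has makespan at most `2T` and average machine load `L`,
`0 < L ≤ T`, `γ ≥ 1`, and `k` is the number of machines with load `> T + γL`
(the bad machines), then `k < m / (γ + 1)`. -/
theorem bad_machines_card_lt {Mach J : Type*} [Fintype Mach] [Nonempty Mach]
    [Fintype J] [DecidableEq Mach]
    (p : Mach → J → ℝ) (hp : ∀ i j, 0 ≤ p i j)
    (α : J → Mach) (T L γ : ℝ)
    (hL : 0 < L) (hLT : L ≤ T) (hγ : 1 ≤ γ)
    (hmak : ∀ i, mload p α i ≤ 2 * T)
    (havg : (∑ i, mload p α i) / (Fintype.card Mach : ℝ) = L) :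
    (((Finset.univ.filter (fun i => T + γ * L < mload p α i)).card : ℝ))
      < (Fintype.card Mach : ℝ) / (γ + 1) := by
  have hm : (0 : ℝ) < (Fintype.card Mach : ℝ) := by
    exact_mod_cast Fintype.card_pos
  have hγ1 : (0 : ℝ) < γ + 1 := by linarith
  set B := Finset.univ.filter (fun i => T + γ * L < mload p α i) with hB
  have hnonneg : ∀ i, 0 ≤ mload p α i := fun i =>
    Finset.sum_nonneg fun j _ => hp i j
  have htot : (∑ i, mload p α i) = (Fintype.card Mach : ℝ) * L := by
    field_simp at havg
    linarith [havg]
  rcases B.eq_empty_or_nonempty with h | h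
  · rw [h]
    simp only [Finset.card_empty, Nat.cast_zero]
    positivity
  · have h1 : (B.card : ℝ) * (T + γ * L) < ∑ i ∈ B, mload p α i := by
      have := Finset.sum_lt_sum_of_nonempty h (f := fun _ => T + γ * L)
        (g := mload p α) (fun i hi => by
          simp only [hB, Finset.mem_filter] at hi; exact hi.2)
      rw [Finset.sum_const, nsmul_eq_mul] at this; exact this
    have h2 : ∑ i ∈ B, mload p α i ≤ ∑ i, mload p α i :=
      Finset.sum_le_sum_of_subset_of_nonneg (Finset.subset_univ B)
        (fun i _ _ => hnonneg i)
    have h3 : (B.card : ℝ) * ((γ + 1) * L) ≤ (B.card : ℝ) * (T + γ * L) := by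
      apply mul_le_mul_of_nonneg_left (by linarith) (Nat.cast_nonneg _)
    rw [lt_div_iff₀ hγ1]
    have := h3.trans_lt (h1.trans_le (h2.trans_eq htot))
    nlinarith [this, hL]
end

section
/- Let α be an assignment of jobs to machines whose makespan is at most 2T and whose average machine load equals L, where 0 < L ≤ T. Let γ ≥ 1, let k = |Bad(α,γ)| be the number of machines whose load exceeds T + γ·L, and let Good(α,γ) be the set of machines whose load is at most γ·L. Then |Good(α,γ)| > (1 − 1/γ)·m + (k/γ)·(T/L). -/
/-- If `α` has makespan at most `2T` and average machine load `L`,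
`0 < L ≤ T`, `γ ≥ 1`, `k` is the number of machines with load `> T + γL`, and
`Good(α,γ)` is the set of machines with load at most `γL`, then
`|Good(α,γ)| > (1 - 1/γ)·m + (k/γ)·(T/L)`. -/
theorem good_machines_card_gt {Mach J : Type*} [Fintype Mach] [Nonempty Mach]
    [Fintype J] [DecidableEq Mach]
    (p : Mach → J → ℝ) (hp : ∀ i j, 0 ≤ p i j)
    (α : J → Mach) (T L γ : ℝ)
    (hL : 0 < L) (hLT : L ≤ T) (hγ : 1 ≤ γ)
    (hmak : ∀ i, mload p α i ≤ 2 * T)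
    (havg : (∑ i, mload p α i) / (Fintype.card Mach : ℝ) = L) :
    (1 - 1 / γ) * (Fintype.card Mach : ℝ)
        + (((Finset.univ.filter (fun i => T + γ * L < mload p α i)).card : ℝ) / γ) * (T / L)
      < ((Finset.univ.filter (fun i => mload p α i ≤ γ * L)).card : ℝ) := by
  classical
  have hγ0 : (0:ℝ) < γ := lt_of_lt_of_le one_pos hγ
  have hm : (0:ℝ) < (Fintype.card Mach : ℝ) := by exact_mod_cast Fintype.card_pos
  have hT : (0:ℝ) < T := lt_of_lt_of_le hL hLT
  have hml : ∀ i, 0 ≤ mload p α i := fun i => Finset.sum_nonneg (fun j _ => hp i j)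
  have htot : ∑ i, mload p α i = (Fintype.card Mach : ℝ) * L := by
    rw [div_eq_iff (ne_of_gt hm)] at havg; linarith [havg]
  set G := Finset.univ.filter (fun i => mload p α i ≤ γ * L) with hG
  set NG := Finset.univ.filter (fun i => ¬ mload p α i ≤ γ * L) with hNG
  set B := Finset.univ.filter (fun i => T + γ * L < mload p α i) with hB
  have hcard : (G.card : ℝ) + (NG.card : ℝ) = (Fintype.card Mach : ℝ) := by
    rw [hG, hNG]
    exact_mod_cast congrArg (Nat.cast : ℕ → ℝ)
      (Finset.card_filter_add_card_filter_not (s := Finset.univ)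
        (p := fun i => mload p α i ≤ γ * L))
  have hBsubNG : B ⊆ NG := by
    intro i hi
    rw [hB, Finset.mem_filter] at hi
    rw [hNG, Finset.mem_filter]
    refine ⟨Finset.mem_univ i, not_le.mpr ?_⟩
    nlinarith [hi.2]
  rcases NG.eq_empty_or_nonempty with hne | hne
  · -- everyone good
    have hBempty : B = ∅ := Finset.subset_empty.mp (hne ▸ hBsubNG)
    have hGuniv : (G.card : ℝ) = (Fintype.card Mach : ℝ) := by
      have := hcard
      rw [hne] at this; simpa using this
    rw [hBempty, hGuniv]
    simp only [Finset.card_empty, Nat.cast_zero, zero_div, zero_mul, add_zero]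
    have h1 : 0 < 1 / γ := by positivity
    nlinarith
  · -- some non-good machine exists
    have hsplit := Finset.sum_filter_add_sum_filter_not Finset.univ
      (fun i => mload p α i ≤ γ * L) (mload p α)
    have hGnn : 0 ≤ ∑ i ∈ G, mload p α i := Finset.sum_nonneg (fun i _ => hml i)
    -- lower bound each non-good load
    have hsum : ∑ i ∈ NG, (γ * L + (if T + γ * L < mload p α i then T else 0))
        < ∑ i ∈ NG, mload p α i := by
      apply Finset.sum_lt_sum_of_nonempty hne
      intro i hi
      rw [hNG, Finset.mem_filter] at hi
      by_cases h : T + γ * L < mload p α i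
      · simp [h]; linarith
      · simp [h]; exact not_le.mp hi.2
    have hfilter : NG.filter (fun i => T + γ * L < mload p α i) = B := by
      rw [hNG, hB, Finset.filter_filter]
      apply Finset.filter_congr
      intro i _
      constructor
      · intro h; exact h.2
      · intro h; exact ⟨not_le.mpr (by nlinarith), h⟩
    have hsumf : ∑ i ∈ NG, (γ * L + (if T + γ * L < mload p α i then T else 0))
        = (NG.card : ℝ) * (γ * L) + (B.card : ℝ) * T := by
      rw [Finset.sum_add_distrib, Finset.sum_const, ← Finset.sum_filter, hfilter,
        Finset.sum_const]
      push_cast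
      ring
    have key : (NG.card : ℝ) * (γ * L) + (B.card : ℝ) * T < (Fintype.card Mach : ℝ) * L := by
      rw [← hsumf]
      calc ∑ i ∈ NG, (γ * L + (if T + γ * L < mload p α i then T else 0))
          < ∑ i ∈ NG, mload p α i := hsum
        _ ≤ ∑ i, mload p α i := by
            rw [← hsplit]; linarith
        _ = (Fintype.card Mach : ℝ) * L := htot
    have hgoal_eq : (1 - 1 / γ) * (Fintype.card Mach : ℝ) + ((B.card : ℝ) / γ) * (T / L)
        = ((γ - 1) * ((Fintype.card Mach : ℝ) * L) + (B.card : ℝ) * T) / (γ * L) := by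
      field_simp
    have hc2 : (G.card : ℝ) * (γ * L) + (NG.card : ℝ) * (γ * L)
        = (Fintype.card Mach : ℝ) * (γ * L) := by rw [← add_mul, hcard]
    rw [hgoal_eq, div_lt_iff₀ (by positivity)]
    nlinarith [key, hc2]
end

section
/- Let α be an assignment of jobs to machines whose makespan is at most 2T and whose average machine load equals L, where 0 < L ≤ T. Suppose the instance has feasibility factor ε ∈ (0,1] with respect to T, i.e., every job is legal on at least ε·m machines, and suppose ε ≥ L/T. Let k = |Bad(α,1/ε)|. Then for every job j, the number of machines in Good(α,1/ε) that are legal for j satisfies |Good_j(α,1/ε)| > ε·k·(T/L); in particular |Good_j(α,1/ε)| ≥ k. -/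
/-- Suppose `α` has makespan at most `2T` and average machine load
`L`, `0 < L ≤ T`, the instance has feasibility factor `ε ∈ (0,1]` w.r.t. `T`
(every job is legal, i.e. has processing time at most `T`, on at least `ε·m`
machines), and `ε ≥ L/T`.  Let `k = |Bad(α,1/ε)|` (machines with load
`> T + (1/ε)·L`).  Then for every job `j`, the number of machines in
`Good(α,1/ε)` (load at most `(1/ε)·L`) that are legal for `j` is
`> ε·k·(T/L)`, and in particular it is `≥ k`. -/
theorem good_machines_for_job {Mach J : Type*} [Fintype Mach] [Nonempty Mach]
    [Fintype J] [DecidableEq Mach]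
    (p : Mach → J → ℝ) (hp : ∀ i j, 0 ≤ p i j)
    (α : J → Mach) (T L ε : ℝ)
    (hL : 0 < L) (hLT : L ≤ T)
    (hε0 : 0 < ε) (hε1 : ε ≤ 1) (hεLT : L / T ≤ ε)
    (hfeas : ∀ j : J, ε * (Fintype.card Mach : ℝ)
      ≤ ((Finset.univ.filter (fun i => p i j ≤ T)).card : ℝ))
    (hmak : ∀ i, mload p α i ≤ 2 * T)
    (havg : (∑ i, mload p α i) / (Fintype.card Mach : ℝ) = L) :
    ∀ j : J,
      ε * ((Finset.univ.filter (fun i => T + (1 / ε) * L < mload p α i)).card : ℝ) * (T / L)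
          < ((Finset.univ.filter
              (fun i => mload p α i ≤ (1 / ε) * L ∧ p i j ≤ T)).card : ℝ)
      ∧ (Finset.univ.filter (fun i => T + (1 / ε) * L < mload p α i)).card
          ≤ (Finset.univ.filter
              (fun i => mload p α i ≤ (1 / ε) * L ∧ p i j ≤ T)).card := by
  intro j
  classical
  have hT : 0 < T := lt_of_lt_of_le hL hLT
  have hm0 : 0 < (Fintype.card Mach : ℝ) := by
    exact_mod_cast Fintype.card_pos
  set m : ℝ := (Fintype.card Mach : ℝ) with hmdef
  have hml : ∀ i, 0 ≤ mload p α i := fun i =>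
    Finset.sum_nonneg fun j' _ => hp i j'
  have hsum : ∑ i, mload p α i = m * L := by
    have := havg
    field_simp at this
    linarith [this]
  set Bd := Finset.univ.filter (fun i => T + (1 / ε) * L < mload p α i) with hBd
  set S := Finset.univ.filter (fun i => (1 / ε) * L < mload p α i) with hS
  have hBS : Bd ⊆ S := by
    intro i hi
    simp only [hBd, Finset.mem_filter] at hi
    simp only [hS, Finset.mem_filter]
    exact ⟨hi.1, by linarith [hi.2]⟩
  set k : ℕ := Bd.card with hk
  set b : ℕ := S.card with hb
  have hSuniv : S ⊆ Finset.univ := Finset.subset_univ S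
  have hSle : ∑ i ∈ S, mload p α i ≤ m * L := by
    rw [← hsum]
    exact Finset.sum_le_sum_of_subset_of_nonneg hSuniv (fun i _ _ => hml i)
  -- Key bound: k*T + b*((1/ε)*L) < m*L
  have hkey : (k : ℝ) * T + (b : ℝ) * ((1 / ε) * L) < m * L := by
    have hsplit : ∑ i ∈ S \ Bd, mload p α i + ∑ i ∈ Bd, mload p α i
        = ∑ i ∈ S, mload p α i := Finset.sum_sdiff hBS
    have hcard : ((S \ Bd).card : ℝ) = (b : ℝ) - (k : ℝ) := by
      rw [Finset.card_sdiff_of_subset hBS]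
      exact_mod_cast Nat.cast_sub (Finset.card_le_card hBS)
    by_cases hBne : Bd.Nonempty
    · have h1 : (k : ℝ) * (T + (1 / ε) * L) < ∑ i ∈ Bd, mload p α i := by
        calc (k : ℝ) * (T + (1 / ε) * L) = ∑ _i ∈ Bd, (T + (1 / ε) * L) := by
              rw [Finset.sum_const, nsmul_eq_mul]
          _ < _ := Finset.sum_lt_sum_of_nonempty hBne
              (fun i hi => by
                simp only [hBd, Finset.mem_filter] at hi; exact hi.2)
      have h2 : ((b : ℝ) - (k : ℝ)) * ((1 / ε) * L) ≤ ∑ i ∈ S \ Bd, mload p α i := by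
        have := Finset.sum_le_sum (s := S \ Bd)
          (f := fun _ => (1 / ε) * L) (g := fun i => mload p α i)
          (fun i hi => by
            have hi' := Finset.mem_sdiff.mp hi
            have := hi'.1
            simp only [hS, Finset.mem_filter] at this
            linarith [this.2])
        rw [Finset.sum_const, nsmul_eq_mul, hcard] at this
        exact this
      nlinarith [hsplit, hSle, h1, h2]
    · have hk0 : (k : ℝ) = 0 := by
        simp only [hk]
        rw [Finset.not_nonempty_iff_eq_empty] at hBne
        simp [hBne]
      by_cases hSne : S.Nonempty
      · have h1 : (b : ℝ) * ((1 / ε) * L) < ∑ i ∈ S, mload p α i := by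
          have := Finset.sum_lt_sum_of_nonempty hSne
            (f := fun _ => (1 / ε) * L) (g := fun i => mload p α i)
            (fun i hi => by
              simp only [hS, Finset.mem_filter] at hi; exact hi.2)
          simpa [Finset.sum_const, nsmul_eq_mul] using this
        nlinarith [hSle, h1]
      · have hb0 : (b : ℝ) = 0 := by
          simp only [hb]
          rw [Finset.not_nonempty_iff_eq_empty] at hSne
          simp [hSne]
        rw [hk0, hb0]
        have : 1 ≤ m := by
          rw [hmdef]; exact_mod_cast Fintype.card_pos (α := Mach)
        nlinarith
  -- From hkey: ε*k*(T/L) < ε*m - b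
  have hmain : ε * (k : ℝ) * (T / L) < ε * m - (b : ℝ) := by
    have hkey2 : ε * (k : ℝ) * T + (b : ℝ) * L < ε * (m * L) := by
      have e1 : ε * ((k : ℝ) * T + (b : ℝ) * ((1 / ε) * L))
          = ε * (k : ℝ) * T + (b : ℝ) * L := by
        field_simp
      rw [← e1]
      exact mul_lt_mul_of_pos_left hkey hε0
    have h2 : ε * (k : ℝ) * (T / L) = ε * (k : ℝ) * T / L := by ring
    rw [h2, div_lt_iff₀ hL]
    nlinarith [hkey2]
  -- Good_j lower bound
  set G := Finset.univ.filter (fun i => mload p α i ≤ (1 / ε) * L ∧ p i j ≤ T) with hG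
  set Leg := Finset.univ.filter (fun i => p i j ≤ T) with hLeg
  have hsub : Leg \ S ⊆ G := by
    intro i hi
    have hi' := Finset.mem_sdiff.mp hi
    have h1 : p i j ≤ T := by
      have := hi'.1; simp only [hLeg, Finset.mem_filter] at this; exact this.2
    have h2 : mload p α i ≤ (1 / ε) * L := by
      have := hi'.2
      simp only [hS, Finset.mem_filter, Finset.mem_univ, true_and] at this
      exact le_of_not_gt this
    simp only [hG, Finset.mem_filter]
    exact ⟨Finset.mem_univ i, h2, h1⟩
  have hcard1 : Leg.card ≤ (Leg \ S).card + S.card := Finset.card_le_card_sdiff_add_card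
  have hcard2 : (Leg \ S).card ≤ G.card := Finset.card_le_card hsub
  have hεm : ε * m ≤ (Leg.card : ℝ) := hfeas j
  have hGlb : ε * m - (b : ℝ) ≤ (G.card : ℝ) := by
    have h1 : (Leg.card : ℝ) ≤ ((Leg \ S).card : ℝ) + (b : ℝ) := by exact_mod_cast hcard1
    have h2 : ((Leg \ S).card : ℝ) ≤ (G.card : ℝ) := by exact_mod_cast hcard2
    linarith
  have hfirst : ε * (k : ℝ) * (T / L) < (G.card : ℝ) := lt_of_lt_of_le hmain hGlb
  refine ⟨hfirst, ?_⟩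
  -- k ≤ ε*k*(T/L) since ε*T/L ≥ 1
  have hεT : L ≤ ε * T := by
    rw [div_le_iff₀ hT] at hεLT; linarith
  have h1 : 1 ≤ ε * (T / L) := by
    rw [mul_div_assoc', le_div_iff₀ hL]; linarith
  have hk_le : (k : ℝ) ≤ ε * (k : ℝ) * (T / L) := by
    have := le_mul_of_one_le_right (Nat.cast_nonneg k : (0:ℝ) ≤ k) h1
    nlinarith [this]
  have : (k : ℝ) < (G.card : ℝ) := lt_of_le_of_lt hk_le hfirst
  exact_mod_cast le_of_lt this
end

section
/- Let α be an assignment of jobs to machines whose makespan is at most 2T and whose average machine load equals L, where 0 < L ≤ T. Suppose the instance has feasibility factor ε ∈ (0,1] with respect to T and ε ≥ L/T. For each machine i ∈ Bad(α,1/ε), let j_max^i denote a job assigned to i of maximum processing time on i. Then for every subset A ⊆ Bad(α,1/ε), the neighborhood N(A) = ∪_{i∈A} Good_{j_max^i}(α,1/ε) satisfies |N(A)| ≥ |A|. -/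
/-- Hall's condition. Suppose `α` has makespan at most `2T` and
average machine load `L`, `0 < L ≤ T`, feasibility factor `ε ∈ (0,1]` with
`ε ≥ L/T`, and for every machine `i ∈ Bad(α,1/ε)` the job `jmax i` is a job
assigned to `i` of maximum processing time on `i`.  Then for every subset `A`
of `Bad(α,1/ε)`, the neighborhood `N(A) = ⋃_{i∈A} Good_{jmax i}(α,1/ε)`
satisfies `|N(A)| ≥ |A|`. -/
theorem halls_condition {Mach J : Type*} [Fintype Mach] [Nonempty Mach]
    [Fintype J] [DecidableEq Mach]
    (p : Mach → J → ℝ) (hp : ∀ i j, 0 ≤ p i j)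
    (α : J → Mach) (T L ε : ℝ)
    (hL : 0 < L) (hLT : L ≤ T)
    (hε0 : 0 < ε) (hε1 : ε ≤ 1) (hεLT : L / T ≤ ε)
    (hfeas : ∀ j : J, ε * (Fintype.card Mach : ℝ)
      ≤ ((Finset.univ.filter (fun i => p i j ≤ T)).card : ℝ))
    (hmak : ∀ i, mload p α i ≤ 2 * T)
    (havg : (∑ i, mload p α i) / (Fintype.card Mach : ℝ) = L)
    (jmax : Mach → J)
    (hjmax : ∀ i, T + (1 / ε) * L < mload p α i →
      α (jmax i) = i ∧ ∀ j, α j = i → p i j ≤ p i (jmax i)) :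
    ∀ A : Finset Mach,
      A ⊆ Finset.univ.filter (fun i => T + (1 / ε) * L < mload p α i) →
      A.card ≤ (A.biUnion (fun i => Finset.univ.filter
        (fun i' => mload p α i' ≤ (1 / ε) * L ∧ p i' (jmax i) ≤ T))).card := by
  intro A hA
  rcases A.eq_empty_or_nonempty with rfl | ⟨i0, hi0⟩
  · simp
  have hT : 0 < T := lt_of_lt_of_le hL hLT
  have hLεT : L ≤ ε * T := by
    rw [div_le_iff₀ hT] at hεLT; linarith
  set N := A.biUnion (fun i => Finset.univ.filter
      (fun i' => mload p α i' ≤ (1 / ε) * L ∧ p i' (jmax i) ≤ T)) with hN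
  set K := Finset.univ.filter (fun i' => ¬ mload p α i' ≤ (1 / ε) * L) with hK
  have hm : (0 : ℝ) < (Fintype.card Mach : ℝ) := by
    exact_mod_cast Fintype.card_pos
  have hload0 : ∀ i, 0 ≤ mload p α i := fun i =>
    Finset.sum_nonneg (fun j _ => hp i j)
  -- Lemma 1: legal machines for jmax i0 are in N ∪ K
  have h1 : Finset.univ.filter (fun i' => p i' (jmax i0) ≤ T) ⊆ N ∪ K := by
    intro i' hi'
    rw [Finset.mem_filter] at hi'
    by_cases hg : mload p α i' ≤ (1 / ε) * L
    · exact Finset.mem_union_left _ (Finset.mem_biUnion.2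
        ⟨i0, hi0, Finset.mem_filter.2 ⟨Finset.mem_univ _, hg, hi'.2⟩⟩)
    · exact Finset.mem_union_right _ (Finset.mem_filter.2 ⟨Finset.mem_univ _, hg⟩)
  have hεm : ε * (Fintype.card Mach : ℝ) ≤ (N.card : ℝ) + (K.card : ℝ) := by
    calc ε * (Fintype.card Mach : ℝ)
        ≤ ((Finset.univ.filter (fun i => p i (jmax i0) ≤ T)).card : ℝ) := hfeas _
      _ ≤ ((N ∪ K).card : ℝ) := by exact_mod_cast Finset.card_le_card h1
      _ ≤ (N.card : ℝ) + (K.card : ℝ) := by exact_mod_cast Finset.card_union_le N K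
  -- A ⊆ K
  have hAK : A ⊆ K := by
    intro i hi
    have := Finset.mem_filter.1 (hA hi)
    refine Finset.mem_filter.2 ⟨Finset.mem_univ _, ?_⟩
    have hεL : 0 < (1 / ε) * L := by positivity
    push_neg
    linarith [this.2]
  -- Lemma 2: sum of loads bounds
  have hsumA : (A.card : ℝ) * (T + (1 / ε) * L) ≤ ∑ i ∈ A, mload p α i := by
    have : ∀ i ∈ A, T + (1 / ε) * L ≤ mload p α i := fun i hi =>
      le_of_lt (Finset.mem_filter.1 (hA hi)).2
    calc (A.card : ℝ) * (T + (1 / ε) * L) = ∑ _i ∈ A, (T + (1 / ε) * L) := by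
          rw [Finset.sum_const, nsmul_eq_mul]
      _ ≤ ∑ i ∈ A, mload p α i := Finset.sum_le_sum this
  have hsumKA : ((K \ A).card : ℝ) * ((1 / ε) * L) ≤ ∑ i ∈ K \ A, mload p α i := by
    have : ∀ i ∈ K \ A, (1 / ε) * L ≤ mload p α i := by
      intro i hi
      have := (Finset.mem_filter.1 (Finset.mem_sdiff.1 hi).1).2
      linarith [lt_of_not_ge this]
    calc ((K \ A).card : ℝ) * ((1 / ε) * L) = ∑ _i ∈ K \ A, ((1 / ε) * L) := by
          rw [Finset.sum_const, nsmul_eq_mul]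
      _ ≤ _ := Finset.sum_le_sum this
  have hsplit : ∑ i ∈ K \ A, mload p α i + ∑ i ∈ A, mload p α i = ∑ i ∈ K, mload p α i :=
    Finset.sum_sdiff hAK
  have hKuniv : ∑ i ∈ K, mload p α i ≤ ∑ i, mload p α i :=
    Finset.sum_le_sum_of_subset_of_nonneg (Finset.subset_univ K)
      (fun i _ _ => hload0 i)
  have htot : ∑ i, mload p α i = L * (Fintype.card Mach : ℝ) := by
    field_simp at havg; linarith
  have hcardKA : ((K \ A).card : ℝ) = (K.card : ℝ) - (A.card : ℝ) := by
    have h := Finset.card_sdiff_of_subset hAK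
    have hle := Finset.card_le_card hAK
    rw [h]
    exact Nat.cast_sub hle
  rw [hcardKA] at hsumKA
  -- combine
  have key : (K.card : ℝ) * ((1 / ε) * L) + (A.card : ℝ) * T
      ≤ L * (Fintype.card Mach : ℝ) := by
    nlinarith [hsumA, hsumKA, hsplit, hKuniv, htot]
  -- multiply key by ε
  have key2 : (K.card : ℝ) * L + (A.card : ℝ) * (ε * T)
      ≤ ε * L * (Fintype.card Mach : ℝ) := by
    calc (K.card : ℝ) * L + (A.card : ℝ) * (ε * T)
        = ε * ((K.card : ℝ) * ((1 / ε) * L) + (A.card : ℝ) * T) := by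
          rw [mul_add, mul_left_comm ε (K.card : ℝ), ← mul_assoc ε (1 / ε) L,
            mul_one_div_cancel hε0.ne', one_mul]; ring
      _ ≤ ε * (L * (Fintype.card Mach : ℝ)) :=
          mul_le_mul_of_nonneg_left key hε0.le
      _ = ε * L * (Fintype.card Mach : ℝ) := by ring
  have hAcast : (A.card : ℝ) * L ≤ (A.card : ℝ) * (ε * T) :=
    mul_le_mul_of_nonneg_left hLεT (Nat.cast_nonneg _)
  have final : (A.card : ℝ) ≤ (N.card : ℝ) := by
    nlinarith [key2, hAcast, mul_le_mul_of_nonneg_left hεm hL.le, hL]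
  exact_mod_cast final
end

section
/- Let α be an assignment of jobs to machines whose makespan is at most 2T and whose average machine load equals L, where 0 < L ≤ T. Suppose the instance has feasibility factor ε ∈ (0,1] with respect to T and ε ≥ L/T. For each machine i ∈ Bad(α,1/ε), let j_max^i denote a job assigned to i of maximum processing time on i. Then there exists an injective map μ : Bad(α,1/ε) → Good(α,1/ε) such that for every i ∈ Bad(α,1/ε), the machine μ(i) is legal for the job j_max^i. -/
/-- Perfect matching of bad machines into good machines. Under
makespan at most `2T`, average machine load `L` with `0 < L ≤ T`, feasibility
factor `ε ∈ (0,1]` with `ε ≥ L/T`, and `jmax i` a maximum-processing-time job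
assigned to each bad machine `i`, there is an injective map `μ` from
`Bad(α,1/ε)` into `Good(α,1/ε)` such that `μ i` is legal for the job `jmax i`
for every bad machine `i`. -/
theorem exists_matching {Mach J : Type*} [Fintype Mach] [Nonempty Mach]
    [Fintype J] [DecidableEq Mach]
    (p : Mach → J → ℝ) (hp : ∀ i j, 0 ≤ p i j)
    (α : J → Mach) (T L ε : ℝ)
    (hL : 0 < L) (hLT : L ≤ T)
    (hε0 : 0 < ε) (hε1 : ε ≤ 1) (hεLT : L / T ≤ ε)
    (hfeas : ∀ j : J, ε * (Fintype.card Mach : ℝ)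
      ≤ ((Finset.univ.filter (fun i => p i j ≤ T)).card : ℝ))
    (hmak : ∀ i, mload p α i ≤ 2 * T)
    (havg : (∑ i, mload p α i) / (Fintype.card Mach : ℝ) = L)
    (jmax : Mach → J)
    (hjmax : ∀ i, T + (1 / ε) * L < mload p α i →
      α (jmax i) = i ∧ ∀ j, α j = i → p i j ≤ p i (jmax i)) :
    ∃ μ : Mach → Mach,
      Set.InjOn μ {i | T + (1 / ε) * L < mload p α i} ∧
      ∀ i, T + (1 / ε) * L < mload p α i →
        mload p α (μ i) ≤ (1 / ε) * L ∧ p (μ i) (jmax i) ≤ T := by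
  classical
  set m : ℕ := Fintype.card Mach with hm
  have hm0 : 0 < (m : ℝ) := by exact_mod_cast Fintype.card_pos
  have hT0 : 0 < T := lt_of_lt_of_le hL hLT
  have hLεT : (1 / ε) * L ≤ T := by
    rw [div_le_iff₀ hT0] at hεLT
    rw [one_div, inv_mul_le_iff₀ hε0]
    linarith
  have hLε0 : 0 < (1 / ε) * L := by positivity
  have hsum : ∑ i, mload p α i = L * (m : ℝ) := by
    rw [div_eq_iff (ne_of_gt hm0)] at havg
    exact havg
  -- Bad and NotGood machines
  set Bad : Finset Mach := Finset.univ.filter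
    (fun i => T + (1 / ε) * L < mload p α i) with hBad
  set NG : Finset Mach := Finset.univ.filter
    (fun i => (1 / ε) * L < mload p α i) with hNG
  have hBadNG : Bad ⊆ NG := by
    intro i hi
    simp only [hBad, hNG, Finset.mem_filter, Finset.mem_univ, true_and] at hi ⊢
    linarith
  -- candidate sets
  set t : Mach → Finset Mach := fun i =>
    if i ∈ Bad then
      (Finset.univ.filter (fun i' => p i' (jmax i) ≤ T)) ∩
        (Finset.univ.filter (fun i' => mload p α i' ≤ (1 / ε) * L))
    else Finset.univ with ht
  -- key counting inequality
  have hcount : NG.Nonempty → (Bad.card : ℝ) + NG.card < ε * m := by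
    intro hne
    have hstep : ∑ i ∈ NG, ((1 / ε) * L + if i ∈ Bad then (1 / ε) * L else 0)
        < ∑ i ∈ NG, mload p α i := by
      apply Finset.sum_lt_sum_of_nonempty hne
      intro i hi
      simp only [hNG, Finset.mem_filter, Finset.mem_univ, true_and] at hi
      by_cases hib : i ∈ Bad
      · simp only [hib, if_pos]
        have : T + (1 / ε) * L < mload p α i := by
          simpa [hBad, Finset.mem_filter] using hib
        linarith
      · simp only [hib, if_neg, not_false_iff, add_zero]
        exact hi
    have hsplit : ∑ i ∈ NG, ((1 / ε) * L + if i ∈ Bad then (1 / ε) * L else 0)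
        = (NG.card : ℝ) * ((1 / ε) * L) + (Bad.card : ℝ) * ((1 / ε) * L) := by
      rw [Finset.sum_add_distrib, Finset.sum_const, nsmul_eq_mul]
      have hfil : NG.filter (fun x => x ∈ Bad) = Bad := by
        ext x
        simp only [Finset.mem_filter]
        exact ⟨fun h => h.2, fun h => ⟨hBadNG h, h⟩⟩
      rw [← Finset.sum_filter, hfil, Finset.sum_const, nsmul_eq_mul]
    have hle : ∑ i ∈ NG, mload p α i ≤ ∑ i, mload p α i := by
      apply Finset.sum_le_sum_of_subset_of_nonneg (Finset.subset_univ _)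
      intro i _ _
      exact Finset.sum_nonneg fun j _ => hp i j
    rw [hsplit] at hstep
    have h1 : ((NG.card : ℝ) + Bad.card) * ((1 / ε) * L) < L * m := by
      rw [add_mul]; rw [hsum] at hle; linarith
    have h2 : ((NG.card : ℝ) + Bad.card) * ((1 / ε) * L) < (ε * m) * ((1 / ε) * L) := by
      calc ((NG.card : ℝ) + Bad.card) * ((1 / ε) * L) < L * m := h1
        _ = (ε * m) * ((1 / ε) * L) := by field_simp
    have := lt_of_mul_lt_mul_right h2 (le_of_lt hLε0)
    linarith
  -- Hall's condition
  have hall : ∀ s : Finset Mach, s.card ≤ (s.biUnion t).card := by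
    intro s
    by_cases hsB : s ⊆ Bad
    · rcases s.eq_empty_or_nonempty with rfl | ⟨i, hi⟩
      · simp
      · have hiB : i ∈ Bad := hsB hi
        have hne : NG.Nonempty := ⟨i, hBadNG hiB⟩
        have hc := hcount hne
        -- the candidate set of i is large
        have hsub : (Finset.univ.filter (fun i' => p i' (jmax i) ≤ T)) \ NG ⊆ t i := by
          intro i' hi'
          simp only [Finset.mem_sdiff, Finset.mem_filter, Finset.mem_univ, true_and,
            hNG, not_lt] at hi'
          simp only [ht, hiB, if_pos, Finset.mem_inter, Finset.mem_filter,
            Finset.mem_univ, true_and]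
          exact hi'
        have hcard1 : ((Finset.univ.filter (fun i' => p i' (jmax i) ≤ T)).card : ℝ)
            ≤ ((Finset.univ.filter (fun i' => p i' (jmax i) ≤ T)) \ NG).card + NG.card := by
          have : (Finset.univ.filter (fun i' => p i' (jmax i) ≤ T)).card
              ≤ ((Finset.univ.filter (fun i' => p i' (jmax i) ≤ T)) \ NG).card + NG.card := by
            calc (Finset.univ.filter (fun i' => p i' (jmax i) ≤ T)).card
                ≤ (((Finset.univ.filter (fun i' => p i' (jmax i) ≤ T)) \ NG) ∪ NG).card := by
                  apply Finset.card_le_card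
                  intro x hx
                  by_cases hxNG : x ∈ NG
                  · exact Finset.mem_union_right _ hxNG
                  · exact Finset.mem_union_left _ (Finset.mem_sdiff.mpr ⟨hx, hxNG⟩)
              _ ≤ _ := Finset.card_union_le _ _
          exact_mod_cast this
        have hscard : (s.card : ℝ) ≤ Bad.card := by
          exact_mod_cast Finset.card_le_card hsB
        have hfi := hfeas (jmax i)
        have hti : (s.card : ℝ) < (t i).card := by
          have h1 : (s.card : ℝ) < ε * m - NG.card := by linarith
          have h2 : (ε : ℝ) * m - NG.card
              ≤ (((Finset.univ.filter (fun i' => p i' (jmax i) ≤ T)) \ NG).card : ℝ) := by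
            linarith
          have h3 : ((((Finset.univ.filter (fun i' => p i' (jmax i) ≤ T)) \ NG).card : ℕ) : ℝ)
              ≤ ((t i).card : ℝ) := by
            exact_mod_cast Finset.card_le_card hsub
          linarith
        have hti' : s.card < (t i).card := by exact_mod_cast hti
        calc s.card ≤ (t i).card := le_of_lt hti'
          _ ≤ (s.biUnion t).card :=
            Finset.card_le_card (fun x hx => Finset.mem_biUnion.mpr ⟨i, hi, hx⟩)
    · obtain ⟨i, hi, hiB⟩ : ∃ i ∈ s, i ∉ Bad := by
        by_contra h
        push_neg at h
        exact hsB h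
      have : s.biUnion t = Finset.univ := by
        apply Finset.eq_univ_of_forall
        intro x
        exact Finset.mem_biUnion.mpr ⟨i, hi, by simp [ht, hiB]⟩
      rw [this]
      exact Finset.card_le_univ s
  obtain ⟨f, hfinj, hft⟩ := (Finset.all_card_le_biUnion_card_iff_exists_injective t).mp hall
  refine ⟨f, hfinj.injOn, ?_⟩
  intro i hi
  have hiB : i ∈ Bad := Finset.mem_filter.mpr ⟨Finset.mem_univ i, hi⟩
  have := hft i
  simp only [ht, hiB, if_pos, Finset.mem_inter, Finset.mem_filter, Finset.mem_univ,
    true_and] at this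
  exact ⟨this.2, this.1⟩
end

section
/- Let α be an assignment of jobs to machines whose makespan is at most 2T and whose average machine load equals L, where 0 < L ≤ T, let ε ∈ (0,1] with ε ≥ L/T, and for each i ∈ Bad(α,1/ε) let j_max^i be a job assigned to i of maximum processing time on i. Suppose that for every machine i, Σ_{j : α(j)=i, j ≠ j_max^i} p_{ij} ≤ T, and suppose μ : Bad(α,1/ε) → Good(α,1/ε) is an injective map such that p_{μ(i), j_max^i} ≤ T for every i ∈ Bad(α,1/ε). Define the assignment β by β(j_max^i) = μ(i) for every i ∈ Bad(α,1/ε) and β(j) = α(j) for all other jobs. Then the makespan of β is at most T + L/ε. -/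
/-- Let `α` have makespan at most `2T` and average machine load
`L`, `0 < L ≤ T`, `ε ∈ (0,1]` with `ε ≥ L/T`, and let `jmax i` be a
maximum-processing-time job assigned to each bad machine `i ∈ Bad(α,1/ε)`.
Suppose that for every machine `i` the total processing time on `i` of the
jobs assigned to `i` other than `jmax i` is at most `T`, and `μ` is an
injective map from `Bad(α,1/ε)` into `Good(α,1/ε)` with
`p (μ i) (jmax i) ≤ T` for every bad `i`.  Define `β` by moving, for each bad
machine `i`, the job `jmax i` to machine `μ i`, leaving all other jobs where
`α` put them.  Then the makespan of `β` is at most `T + L/ε`. -/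
theorem moved_assignment_makespan {Mach J : Type*} [Fintype Mach] [Nonempty Mach]
    [Fintype J] [DecidableEq Mach] [DecidableEq J]
    (p : Mach → J → ℝ) (hp : ∀ i j, 0 ≤ p i j)
    (α : J → Mach) (T L ε : ℝ)
    (hL : 0 < L) (hLT : L ≤ T)
    (hε0 : 0 < ε) (hε1 : ε ≤ 1) (hεLT : L / T ≤ ε)
    (hmak : ∀ i, mload p α i ≤ 2 * T)
    (havg : (∑ i, mload p α i) / (Fintype.card Mach : ℝ) = L)
    (jmax : Mach → J)
    (hjmax : ∀ i, T + (1 / ε) * L < mload p α i →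
      α (jmax i) = i ∧ ∀ j, α j = i → p i j ≤ p i (jmax i))
    (hST : ∀ i, ∑ j ∈ Finset.univ.filter (fun j => α j = i ∧ j ≠ jmax i), p i j ≤ T)
    (μ : Mach → Mach)
    (hμinj : Set.InjOn μ {i | T + (1 / ε) * L < mload p α i})
    (hμ : ∀ i, T + (1 / ε) * L < mload p α i →
      mload p α (μ i) ≤ (1 / ε) * L ∧ p (μ i) (jmax i) ≤ T)
    (β : J → Mach)
    (hβmoved : ∀ i, T + (1 / ε) * L < mload p α i → β (jmax i) = μ i)
    (hβfixed : ∀ j : J, (∀ i, T + (1 / ε) * L < mload p α i → j ≠ jmax i) →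
      β j = α j) :
    ∀ i, mload p β i ≤ T + L / ε := by
  intro i
  have hc : L / ε = (1 / ε) * L := by ring
  rw [hc]
  have hcpos : 0 < (1 / ε) * L := by positivity
  by_cases hbad : T + (1 / ε) * L < mload p α i
  · -- bad machine: it loses jmax i and receives nothing
    have hsub : Finset.univ.filter (fun j => β j = i) ⊆
        Finset.univ.filter (fun j => α j = i ∧ j ≠ jmax i) := by
      intro j hj
      simp only [Finset.mem_filter, Finset.mem_univ, true_and] at hj ⊢
      by_cases hmv : ∀ i', T + (1 / ε) * L < mload p α i' → j ≠ jmax i'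
      · have hβ := hβfixed j hmv
        exact ⟨hβ ▸ hj, hmv i hbad⟩
      · push_neg at hmv
        obtain ⟨i', hi', hji'⟩ := hmv
        have hjm : β j = μ i' := hji' ▸ hβmoved i' hi'
        have hgood := (hμ i' hi').1
        rw [hj] at hjm
        rw [← hjm] at hgood
        exfalso; linarith
    calc mload p β i ≤ ∑ j ∈ Finset.univ.filter (fun j => α j = i ∧ j ≠ jmax i), p i j :=
          Finset.sum_le_sum_of_subset_of_nonneg hsub (fun j _ _ => hp i j)
      _ ≤ T := hST i
      _ ≤ T + (1 / ε) * L := by linarith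
  · push_neg at hbad
    by_cases hrec : ∃ i', (T + (1 / ε) * L < mload p α i') ∧ μ i' = i
    · -- i receives exactly one moved job, from i₀; i is good
      obtain ⟨i₀, hi₀, hμi₀⟩ := hrec
      have hgood : mload p α i ≤ (1 / ε) * L := hμi₀ ▸ (hμ i₀ hi₀).1
      have hpT : p i (jmax i₀) ≤ T := hμi₀ ▸ (hμ i₀ hi₀).2
      have hne : i₀ ≠ i := by
        intro h; rw [h] at hi₀; linarith
      have hnotin : jmax i₀ ∉ Finset.univ.filter (fun j => α j = i) := by
        simp only [Finset.mem_filter, Finset.mem_univ, true_and]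
        rw [(hjmax i₀ hi₀).1]; exact hne
      have hsub : Finset.univ.filter (fun j => β j = i) ⊆
          insert (jmax i₀) (Finset.univ.filter (fun j => α j = i)) := by
        intro j hj
        simp only [Finset.mem_filter, Finset.mem_univ, true_and] at hj
        simp only [Finset.mem_insert, Finset.mem_filter, Finset.mem_univ, true_and]
        by_cases hmv : ∀ i', T + (1 / ε) * L < mload p α i' → j ≠ jmax i'
        · exact Or.inr ((hβfixed j hmv) ▸ hj)
        · push_neg at hmv
          obtain ⟨i', hi', hji'⟩ := hmv
          have hjm : β j = μ i' := hji' ▸ hβmoved i' hi'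
          rw [hj] at hjm
          have : i' = i₀ := hμinj hi' hi₀ (by rw [← hjm, hμi₀])
          exact Or.inl (by rw [hji', this])
      calc mload p β i ≤ ∑ j ∈ insert (jmax i₀) (Finset.univ.filter (fun j => α j = i)), p i j :=
            Finset.sum_le_sum_of_subset_of_nonneg hsub (fun j _ _ => hp i j)
        _ = p i (jmax i₀) + mload p α i := by rw [Finset.sum_insert hnotin]; rfl
        _ ≤ T + (1 / ε) * L := by linarith
    · -- i receives nothing
      push_neg at hrec
      have hsub : Finset.univ.filter (fun j => β j = i) ⊆
          Finset.univ.filter (fun j => α j = i) := by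
        intro j hj
        simp only [Finset.mem_filter, Finset.mem_univ, true_and] at hj ⊢
        by_cases hmv : ∀ i', T + (1 / ε) * L < mload p α i' → j ≠ jmax i'
        · exact (hβfixed j hmv) ▸ hj
        · push_neg at hmv
          obtain ⟨i', hi', hji'⟩ := hmv
          have hjm : β j = μ i' := hji' ▸ hβmoved i' hi'
          rw [hj] at hjm
          exact absurd hjm.symm (hrec i' hi')
      calc mload p β i ≤ mload p α i :=
            Finset.sum_le_sum_of_subset_of_nonneg hsub (fun j _ _ => hp i j)
        _ ≤ T + (1 / ε) * L := hbad
end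

section
/- Let α be an assignment of jobs to machines whose makespan is at most 2T and whose average machine load equals L, where 0 < L ≤ T. Suppose the instance has feasibility factor ε ∈ (0,1] with respect to T with ε ≥ L/T, and suppose that for every machine i, the total processing time on i of all jobs assigned to i except one job of maximum processing time on i is at most T (the Shmoys–Tardos property). Then there exists an assignment β of the jobs to machines whose makespan is at most T + L/ε ≤ 2T. -/
/-- Suppose `α` has makespan at most `2T`, average machine load
`L` with `0 < L ≤ T`, the instance has feasibility factor `ε ∈ (0,1]` w.r.t.
`T` with `ε ≥ L/T`, and `α` has the Shmoys–Tardos property: on every machine,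
the total processing time of the jobs assigned to it except one job of maximum
processing time is at most `T`.  Then there exists an assignment `β` with
makespan at most `T + L/ε ≤ 2T`. -/
theorem exists_improved_assignment {Mach J : Type*} [Fintype Mach] [Nonempty Mach]
    [Fintype J] [DecidableEq Mach] [DecidableEq J]
    (p : Mach → J → ℝ) (hp : ∀ i j, 0 ≤ p i j)
    (α : J → Mach) (T L ε : ℝ)
    (hL : 0 < L) (hLT : L ≤ T)
    (hε0 : 0 < ε) (hε1 : ε ≤ 1) (hεLT : L / T ≤ ε)
    (hfeas : ∀ j : J, ε * (Fintype.card Mach : ℝ)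
      ≤ ((Finset.univ.filter (fun i => p i j ≤ T)).card : ℝ))
    (hmak : ∀ i, mload p α i ≤ 2 * T)
    (havg : (∑ i, mload p α i) / (Fintype.card Mach : ℝ) = L)
    (hST : ∀ i : Mach, ∀ jm : J, α jm = i → (∀ j, α j = i → p i j ≤ p i jm) →
      ∑ j ∈ Finset.univ.filter (fun j => α j = i ∧ j ≠ jm), p i j ≤ T) :
    (∃ β : J → Mach, ∀ i, mload p β i ≤ T + L / ε) ∧ T + L / ε ≤ 2 * T := by
  classical
  have hT : 0 < T := lt_of_lt_of_le hL hLT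
  have hLε : 0 < L / ε := div_pos hL hε0
  have hLεT : L / ε ≤ T := by
    rw [div_le_iff₀ hε0]
    have h1 : L / T * T ≤ ε * T := mul_le_mul_of_nonneg_right hεLT (le_of_lt hT)
    rw [div_mul_cancel₀ _ (ne_of_gt hT)] at h1
    linarith [h1]
  refine ⟨?_, by linarith⟩
  cases isEmpty_or_nonempty J with
  | inl hJ =>
    refine ⟨α, fun i => ?_⟩
    have h0 : mload p α i = 0 := by
      simp [mload, Finset.univ_eq_empty]
    linarith
  | inr hJ =>
    set m' : ℝ := (Fintype.card Mach : ℝ) with hm'def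
    have hm' : 0 < m' := by
      have := Fintype.card_pos (α := Mach)
      simpa [hm'def] using (Nat.cast_pos (α := ℝ)).mpr this
    have hload_nonneg : ∀ i, 0 ≤ mload p α i :=
      fun i => Finset.sum_nonneg (fun j _ => hp i j)
    have hsum : ∑ i, mload p α i = L * m' := by
      field_simp at havg
      linarith [havg]
    -- the max-job selector
    set jm : Mach → J := fun i =>
      if h : (Finset.univ.filter (fun j => α j = i)).Nonempty then
        (Finset.exists_max_image _ (p i) h).choose
      else Classical.arbitrary J with hjmdef
    have hjm : ∀ i, (Finset.univ.filter (fun j => α j = i)).Nonempty →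
        α (jm i) = i ∧ ∀ j, α j = i → p i j ≤ p i (jm i) := by
      intro i h
      have hspec := (Finset.exists_max_image (Finset.univ.filter (fun j => α j = i)) (p i) h).choose_spec
      rw [hjmdef]
      simp only [dif_pos h]
      obtain ⟨hmem, hmax⟩ := hspec
      refine ⟨(Finset.mem_filter.mp hmem).2, fun j hj => hmax j ?_⟩
      exact Finset.mem_filter.mpr ⟨Finset.mem_univ _, hj⟩
    set Over : Finset Mach := Finset.univ.filter (fun i => T + L/ε < mload p α i) with hOverdef
    set Bad : Finset Mach := Finset.univ.filter (fun i => L/ε < mload p α i) with hBaddef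
    have hOB : Over ⊆ Bad := by
      intro i hi
      rw [hOverdef] at hi
      rw [hBaddef]
      simp only [Finset.mem_filter, Finset.mem_univ, true_and] at hi ⊢
      linarith
    have hOver_ne : ∀ i ∈ Over, (Finset.univ.filter (fun j => α j = i)).Nonempty := by
      intro i hi
      rw [hOverdef] at hi
      simp only [Finset.mem_filter, Finset.mem_univ, true_and] at hi
      rcases Finset.eq_empty_or_nonempty (Finset.univ.filter (fun j => α j = i)) with h | h
      · exfalso
        have : mload p α i = 0 := by rw [mload, h, Finset.sum_empty]
        linarith
      · exact h
    -- counting: Bad.card + Over.card ≤ ε * m'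
    have hcount : (Bad.card : ℝ) + (Over.card : ℝ) ≤ ε * m' := by
      have h1 : ∑ k ∈ Bad, mload p α k ≤ L * m' := by
        rw [← hsum]
        exact Finset.sum_le_sum_of_subset_of_nonneg (Finset.subset_univ _)
          (fun i _ _ => hload_nonneg i)
      have h2 : ∑ k ∈ Bad \ Over, mload p α k + ∑ k ∈ Over, mload p α k
          = ∑ k ∈ Bad, mload p α k := Finset.sum_sdiff hOB
      have h3 : ((Bad \ Over).card : ℝ) * (L/ε) ≤ ∑ k ∈ Bad \ Over, mload p α k := by
        rw [← nsmul_eq_mul]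
        apply Finset.card_nsmul_le_sum
        intro k hk
        have := hOB
        have hk' : k ∈ Bad := (Finset.sdiff_subset) hk
        rw [hBaddef] at hk'
        simp only [Finset.mem_filter, Finset.mem_univ, true_and] at hk'
        linarith
      have h4 : (Over.card : ℝ) * (2 * (L/ε)) ≤ ∑ k ∈ Over, mload p α k := by
        rw [← nsmul_eq_mul]
        apply Finset.card_nsmul_le_sum
        intro k hk
        rw [hOverdef] at hk
        simp only [Finset.mem_filter, Finset.mem_univ, true_and] at hk
        linarith
      have hcard : ((Bad \ Over).card : ℝ) = (Bad.card : ℝ) - (Over.card : ℝ) := by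
        rw [Finset.card_sdiff_of_subset hOB]
        have := Finset.card_le_card hOB
        push_cast [Nat.cast_sub this]
        ring
      have h5 : ((Bad.card : ℝ) + (Over.card : ℝ)) * (L/ε) ≤ L * m' := by
        nlinarith [h1, h2, h3, h4, hcard]
      have h6 : L * m' = (ε * m') * (L/ε) := by
        field_simp
      rw [h6] at h5
      exact le_of_mul_le_mul_right h5 hLε
    -- Hall's condition
    set t : Mach → Finset Mach := fun i =>
      if i ∈ Over then (Finset.univ.filter (fun k => p k (jm i) ≤ T)) \ Bad
      else Finset.univ with htdef
    have hkey : ∀ i ∈ Over, (Over.card : ℝ) ≤ ((t i).card : ℝ) := by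
      intro i hi
      have hf := hfeas (jm i)
      have h3 : ((Finset.univ.filter (fun k => p k (jm i) ≤ T)).card : ℝ)
          ≤ (((Finset.univ.filter (fun k => p k (jm i) ≤ T)) \ Bad).card : ℝ) + (Bad.card : ℝ) := by
        exact_mod_cast Nat.cast_le.mpr Finset.card_le_card_sdiff_add_card
      rw [htdef]
      simp only [if_pos hi]
      linarith
    have hhall : ∀ s : Finset Mach, s.card ≤ (s.biUnion t).card := by
      intro s
      by_cases hs : ∀ i ∈ s, i ∈ Over
      · rcases s.eq_empty_or_nonempty with rfl | ⟨i, hi⟩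
        · simp
        · have h1 : t i ⊆ s.biUnion t := Finset.subset_biUnion_of_mem t hi
          have h2 : (Over.card : ℝ) ≤ ((t i).card : ℝ) := hkey i (hs i hi)
          have h3 : s.card ≤ Over.card := Finset.card_le_card (fun x hx => hs x hx)
          have h4 : (t i).card ≤ (s.biUnion t).card := Finset.card_le_card h1
          have h2' : Over.card ≤ (t i).card := by exact_mod_cast h2
          omega
      · push_neg at hs
        obtain ⟨i, hi, hio⟩ := hs
        have ht1 : t i = Finset.univ := by rw [htdef]; simp [hio]
        have ht2 : Finset.univ ⊆ s.biUnion t := ht1 ▸ Finset.subset_biUnion_of_mem t hi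
        calc s.card ≤ Finset.univ.card := Finset.card_le_univ s
        _ ≤ _ := Finset.card_le_card ht2
    obtain ⟨f, hfinj, hft⟩ := (Finset.all_card_le_biUnion_card_iff_exists_injective t).mp hhall
    -- the new assignment
    refine ⟨fun j => if α j ∈ Over ∧ j = jm (α j) then f (α j) else α j, fun k => ?_⟩
    set A : Finset J := Finset.univ.filter
      (fun j => (α j ∈ Over ∧ j = jm (α j)) ∧ f (α j) = k) with hAdef
    set B : Finset J := Finset.univ.filter
      (fun j => ¬(α j ∈ Over ∧ j = jm (α j)) ∧ α j = k) with hBdef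
    have hsplit : Finset.univ.filter
        (fun j => (if α j ∈ Over ∧ j = jm (α j) then f (α j) else α j) = k) = A ∪ B := by
      ext j
      rw [hAdef, hBdef]
      simp only [Finset.mem_filter, Finset.mem_univ, true_and, Finset.mem_union]
      by_cases h : α j ∈ Over ∧ j = jm (α j)
      · rw [if_pos h]
        constructor
        · intro hf; exact Or.inl ⟨h, hf⟩
        · rintro (⟨_, hf⟩ | ⟨hn, _⟩)
          · exact hf
          · exact absurd h hn
      · rw [if_neg h]
        constructor
        · intro hq; exact Or.inr ⟨h, hq⟩
        · rintro (⟨hm, _⟩ | ⟨_, hq⟩)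
          · exact absurd hm h
          · exact hq
    have hdisj : Disjoint A B := by
      rw [Finset.disjoint_left]
      intro j hjA hjB
      rw [hAdef] at hjA
      rw [hBdef] at hjB
      simp only [Finset.mem_filter, Finset.mem_univ, true_and] at hjA hjB
      exact hjB.1 hjA.1
    have hloadβ : mload p (fun j => if α j ∈ Over ∧ j = jm (α j) then f (α j) else α j) k
        = ∑ j ∈ A, p k j + ∑ j ∈ B, p k j := by
      rw [mload, hsplit, Finset.sum_union hdisj]
    rw [hloadβ]
    -- bound on B when k ∈ Over
    have hBbound_over : k ∈ Over → ∑ j ∈ B, p k j ≤ T := by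
      intro hk
      have hne := hOver_ne k hk
      obtain ⟨hjm1, hjm2⟩ := hjm k hne
      have hBeq : B = Finset.univ.filter (fun j => α j = k ∧ j ≠ jm k) := by
        ext j
        rw [hBdef]
        simp only [Finset.mem_filter, Finset.mem_univ, true_and]
        constructor
        · rintro ⟨hnm, hjk⟩
          refine ⟨hjk, fun hje => hnm ?_⟩
          rw [hjk]
          exact ⟨hk, hje⟩
        · rintro ⟨hjk, hne'⟩
          refine ⟨fun hm => ?_, hjk⟩
          rw [hjk] at hm
          exact hne' hm.2
      rw [hBeq]
      exact hST k (jm k) hjm1 hjm2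
    have hBbound_sub : ∑ j ∈ B, p k j ≤ mload p α k := by
      rw [mload]
      apply Finset.sum_le_sum_of_subset_of_nonneg
      · intro j hj
        rw [hBdef] at hj
        simp only [Finset.mem_filter, Finset.mem_univ, true_and] at hj ⊢
        exact hj.2
      · intro j _ _; exact hp k j
    by_cases hex : ∃ i ∈ Over, f i = k
    · obtain ⟨i, hiO, hik⟩ := hex
      have hfti := hft i
      rw [htdef] at hfti
      simp only [if_pos hiO] at hfti
      rw [Finset.mem_sdiff, Finset.mem_filter] at hfti
      obtain ⟨⟨_, hlegal⟩, hnbad⟩ := hfti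
      rw [hik] at hlegal hnbad
      have hknotbad : mload p α k ≤ L/ε := by
        rw [hBaddef] at hnbad
        simp only [Finset.mem_filter, Finset.mem_univ, true_and, not_lt] at hnbad
        exact hnbad
      have hAsub : A ⊆ {jm i} := by
        intro j hj
        rw [hAdef] at hj
        simp only [Finset.mem_filter, Finset.mem_univ, true_and] at hj
        obtain ⟨⟨hjO, hje⟩, hjf⟩ := hj
        have : α j = i := hfinj (by rw [hjf, hik])
        rw [Finset.mem_singleton, hje, this]
      have hAbound : ∑ j ∈ A, p k j ≤ p k (jm i) := by
        calc ∑ j ∈ A, p k j ≤ ∑ j ∈ ({jm i} : Finset J), p k j :=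
          Finset.sum_le_sum_of_subset_of_nonneg hAsub (fun j _ _ => hp k j)
        _ = p k (jm i) := Finset.sum_singleton _ _
      linarith [hAbound, hBbound_sub, hlegal, hknotbad]
    · have hA0 : ∑ j ∈ A, p k j = 0 := by
        push_neg at hex
        have : A = ∅ := by
          rw [hAdef]
          rw [Finset.filter_eq_empty_iff]
          rintro j _ ⟨⟨hjO, _⟩, hjf⟩
          exact (hex (α j) hjO) hjf
        rw [this, Finset.sum_empty]
      rw [hA0, zero_add]
      by_cases hk : k ∈ Over
      · linarith [hBbound_over hk]
      · have : mload p α k ≤ T + L/ε := by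
          rw [hOverdef] at hk
          simp only [Finset.mem_filter, Finset.mem_univ, true_and, not_lt] at hk
          exact hk
        linarith [hBbound_sub]
end

section
/- Let β be a w-feasible assignment of a restricted instance with feasibility factor ε ∈ (0,1], where w ≥ max_j p_j, and let L = (Σ_{j∈J} p_j)/m. If a machine v satisfies δ_v(β) > w + L/ε, then there exists a machine i reachable from v by a directed path in the graph G_β(w) with δ_i(β) ≤ L/ε. Equivalently, there is no machine with load exceeding w + L/ε all of whose reachable machines in G_β(w) have load exceeding L/ε. -/
/-- The load of machine `i` under assignment `β` in a restricted instance
with processing times `p j`. -/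
noncomputable def rload {Mach J : Type*} [Fintype J] [DecidableEq Mach]
    (p : J → ℝ) (β : J → Mach) (i : Mach) : ℝ :=
  ∑ j ∈ Finset.univ.filter (fun j => β j = i), p j

/-- One machine-to-machine step in the directed bipartite graph `G_β(w)`:
there is a job `j` assigned to machine `a` (arc `a → j`) such that machine
`b ≠ a` is feasible for `j` and `p j ≤ w` (arc `j → b`). -/
def rstep {Mach J : Type*} (p : J → ℝ) (F : J → Finset Mach) (w : ℝ)
    (β : J → Mach) (a b : Mach) : Prop :=
  ∃ j, β j = a ∧ b ∈ F j ∧ p j ≤ w ∧ b ≠ a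

/-- In a restricted instance with feasibility factor `ε ∈ (0,1]`,
let `β` be a `w`-feasible assignment with `w ≥ max_j p_j` and
`L = (Σ_j p_j)/m`.  If machine `v` has load `> w + L/ε`, then some machine `i`
reachable from `v` in `G_β(w)` has load at most `L/ε`. -/
theorem heavy_machine_reaches_light {Mach J : Type*} [Fintype Mach] [Nonempty Mach]
    [Fintype J] [Nonempty J] [DecidableEq Mach]
    (p : J → ℝ) (hp : ∀ j, 0 < p j)
    (F : J → Finset Mach) (hF : ∀ j, (F j).Nonempty)
    (ε : ℝ) (hε0 : 0 < ε) (hε1 : ε ≤ 1)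
    (hfeas : ∀ j : J, ε * (Fintype.card Mach : ℝ) ≤ ((F j).card : ℝ))
    (w : ℝ) (hw : ∀ j, p j ≤ w)
    (β : J → Mach) (hβ : ∀ j, β j ∈ F j)
    (L : ℝ) (hL : L = (∑ j, p j) / (Fintype.card Mach : ℝ))
    (v : Mach) (hv : w + L / ε < rload p β v) :
    ∃ i : Mach, Relation.ReflTransGen (rstep p F w β) v i ∧ rload p β i ≤ L / ε := by
  classical
  by_contra hcon
  push_neg at hcon
  set m : ℝ := (Fintype.card Mach : ℝ) with hm
  have hm0 : 0 < m := by positivity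
  -- total sum is m * L
  have htot : ∑ j, p j = m * L := by
    rw [hL]; field_simp
  have hLpos : 0 < L := by
    have : 0 < ∑ j, p j := Finset.sum_pos (fun j _ => hp j) Finset.univ_nonempty
    rw [hL]; positivity
  -- the reachable set
  set R : Finset Mach := Finset.univ.filter
    (fun i => Relation.ReflTransGen (rstep p F w β) v i) with hR
  have hvR : v ∈ R := by
    simp only [hR, Finset.mem_filter, Finset.mem_univ, true_and]
    exact Relation.ReflTransGen.refl
  -- closure: jobs assigned in R have all feasible machines in R
  have hclosed : ∀ j : J, β j ∈ R → F j ⊆ R := by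
    intro j hjR b hb
    by_cases hbe : b = β j
    · rwa [hbe]
    · simp only [hR, Finset.mem_filter, Finset.mem_univ, true_and] at hjR ⊢
      exact hjR.tail ⟨j, rfl, hb, hw j, hbe⟩
  -- every machine in R has load > L/ε
  have hbig : ∀ i ∈ R, L / ε < rload p β i := by
    intro i hi
    simp only [hR, Finset.mem_filter, Finset.mem_univ, true_and] at hi
    exact hcon i hi
  -- machine v has positive load, so some job is assigned to v
  have hvload : 0 < rload p β v := by
    have : 0 ≤ w := le_of_lt (lt_of_lt_of_le (hp (Classical.arbitrary J)) (hw _))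
    have : 0 < w + L / ε := by positivity
    linarith
  have hjv : ∃ j : J, β j = v := by
    by_contra hno
    push_neg at hno
    have : rload p β v = 0 := by
      unfold rload
      rw [Finset.sum_eq_zero]
      intro j hj
      simp only [Finset.mem_filter] at hj
      exact absurd hj.2 (hno j)
    linarith
  obtain ⟨j0, hj0⟩ := hjv
  -- hence |R| ≥ ε m
  have hcardR : ε * m ≤ (R.card : ℝ) := by
    have hsub : F j0 ⊆ R := hclosed j0 (by rw [hj0]; exact hvR)
    have := Finset.card_le_card hsub
    calc ε * m ≤ ((F j0).card : ℝ) := hfeas j0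
      _ ≤ (R.card : ℝ) := by exact_mod_cast this
  -- sum of loads over R equals sum of p over jobs assigned into R
  have hsumR : ∑ i ∈ R, rload p β i = ∑ j ∈ Finset.univ.filter (fun j => β j ∈ R), p j := by
    unfold rload
    exact Finset.sum_fiberwise_eq_sum_filter Finset.univ R β p
  have hsumle : ∑ i ∈ R, rload p β i ≤ m * L := by
    rw [hsumR, ← htot]
    exact Finset.sum_le_sum_of_subset_of_nonneg (Finset.filter_subset _ _)
      (fun j _ _ => (hp j).le)
  -- but each load > L/ε, so sum > |R| * (L/ε) ≥ m * L
  have hsumgt : (R.card : ℝ) * (L / ε) < ∑ i ∈ R, rload p β i := by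
    have := Finset.sum_lt_sum_of_nonempty ⟨v, hvR⟩ hbig
    simpa [Finset.sum_const, nsmul_eq_mul] using this
  have hml : m * L ≤ (R.card : ℝ) * (L / ε) := by
    have h1 : ε * m * (L / ε) ≤ (R.card : ℝ) * (L / ε) := by
      apply mul_le_mul_of_nonneg_right hcardR
      positivity
    have h2 : ε * m * (L / ε) = m * L := by
      field_simp
    linarith
  linarith
end

section
/- For every restricted instance of scheduling with feasibility factor ε ∈ (0,1], letting p_max = max_j p_j and L = (Σ_{j∈J} p_j)/m, there exists a feasible assignment β (i.e., β(j) ∈ F_j for every job j) whose makespan is at most p_max + L/ε. -/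
/-- For every restricted instance with feasibility factor
`ε ∈ (0,1]`, where `pmax = max_j p_j` and `L = (Σ_j p_j)/m`, there exists a
feasible assignment `β` whose makespan is at most `pmax + L/ε`. -/
theorem exists_balanced_assignment {Mach J : Type*} [Fintype Mach] [Nonempty Mach]
    [Fintype J] [Nonempty J] [DecidableEq Mach]
    (p : J → ℝ) (hp : ∀ j, 0 < p j)
    (F : J → Finset Mach) (hF : ∀ j, (F j).Nonempty)
    (ε : ℝ) (hε0 : 0 < ε) (hε1 : ε ≤ 1)
    (hfeas : ∀ j : J, ε * (Fintype.card Mach : ℝ) ≤ ((F j).card : ℝ))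
    (pmax : ℝ) (hpmax1 : ∀ j, p j ≤ pmax) (hpmax2 : ∃ j, p j = pmax)
    (L : ℝ) (hL : L = (∑ j, p j) / (Fintype.card Mach : ℝ)) :
    ∃ β : J → Mach, (∀ j, β j ∈ F j) ∧ ∀ i, rload p β i ≤ pmax + L / ε := by
  classical
  set m : ℝ := (Fintype.card Mach : ℝ) with hm
  have hm0 : 0 < m := by
    rw [hm]
    exact_mod_cast (Fintype.card_pos : 0 < Fintype.card Mach)
  have hεm : 0 < ε * m := mul_pos hε0 hm0
  have hpmax0 : 0 < pmax := by
    obtain ⟨j⟩ := (inferInstance : Nonempty J)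
    exact lt_of_lt_of_le (hp j) (hpmax1 j)
  have key : ∀ S : Finset J, ∃ β : J → Mach, (∀ j, β j ∈ F j) ∧
      ∀ i, (∑ j ∈ S.filter (fun j => β j = i), p j) ≤ pmax + (∑ j ∈ S, p j) / (ε * m) := by
    intro S
    induction S using Finset.induction_on with
    | empty =>
        refine ⟨fun j => (hF j).choose, fun j => (hF j).choose_spec, fun i => ?_⟩
        simp [hpmax0.le]
    | @insert a s ha ih =>
        obtain ⟨β, hβF, hβload⟩ := ih
        obtain ⟨i0, hi0F, hi0min⟩ := Finset.exists_min_image (F a)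
          (fun i => ∑ j ∈ s.filter (fun j => β j = i), p j) (hF a)
        set T : ℝ := ∑ j ∈ s, p j with hT
        have hT0 : 0 ≤ T := Finset.sum_nonneg fun j _ => (hp j).le
        -- the min load over F a is at most T / (ε m)
        have hmin : (∑ j ∈ s.filter (fun j => β j = i0), p j) ≤ T / (ε * m) := by
          have hcard0 : (0 : ℝ) < (F a).card := by
            exact_mod_cast Finset.card_pos.2 (hF a)
          have hsum : ((F a).card : ℝ) * (∑ j ∈ s.filter (fun j => β j = i0), p j)
              ≤ T := by
            have h1 : ((F a).card : ℝ) * (∑ j ∈ s.filter (fun j => β j = i0), p j)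
                ≤ ∑ i ∈ F a, ∑ j ∈ s.filter (fun j => β j = i), p j := by
              calc ((F a).card : ℝ) * (∑ j ∈ s.filter (fun j => β j = i0), p j)
                  = ∑ _i ∈ F a, (∑ j ∈ s.filter (fun j => β j = i0), p j) := by
                    rw [Finset.sum_const, nsmul_eq_mul]
                _ ≤ ∑ i ∈ F a, ∑ j ∈ s.filter (fun j => β j = i), p j :=
                    Finset.sum_le_sum fun i hi => hi0min i hi
            have h2 : ∑ i ∈ F a, ∑ j ∈ s.filter (fun j => β j = i), p j
                ≤ ∑ i : Mach, ∑ j ∈ s.filter (fun j => β j = i), p j := by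
              apply Finset.sum_le_sum_of_subset_of_nonneg (Finset.subset_univ _)
              intro i _ _
              exact Finset.sum_nonneg fun j _ => (hp j).le
            have h3 : ∑ i : Mach, ∑ j ∈ s.filter (fun j => β j = i), p j = T := by
              rw [hT]
              exact Finset.sum_fiberwise s β p
            linarith
          have hem : ε * m ≤ ((F a).card : ℝ) := hfeas a
          have hnn : 0 ≤ ∑ j ∈ s.filter (fun j => β j = i0), p j :=
            Finset.sum_nonneg fun j _ => (hp j).le
          rw [le_div_iff₀ hεm]
          calc (∑ j ∈ s.filter (fun j => β j = i0), p j) * (ε * m)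
              ≤ (∑ j ∈ s.filter (fun j => β j = i0), p j) * ((F a).card : ℝ) :=
                mul_le_mul_of_nonneg_left hem hnn
            _ = ((F a).card : ℝ) * (∑ j ∈ s.filter (fun j => β j = i0), p j) := mul_comm _ _
            _ ≤ T := hsum
        refine ⟨Function.update β a i0, ?_, ?_⟩
        · intro j
          by_cases hja : j = a
          · subst hja; simpa using hi0F
          · simpa [Function.update_of_ne hja] using hβF j
        · intro i
          have hfilter : ∀ j ∈ s, (Function.update β a i0 j = i) ↔ (β j = i) := by
            intro j hj
            have : j ≠ a := fun h => ha (h ▸ hj)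
            simp [Function.update_of_ne this]
          have hsplit : (insert a s).filter (fun j => Function.update β a i0 j = i)
              = if i0 = i then insert a (s.filter (fun j => β j = i))
                else s.filter (fun j => β j = i) := by
            rw [Finset.filter_insert, Finset.filter_congr hfilter]
            simp [Function.update_self]
          have hsum_insert : ∑ j ∈ insert a s, p j = p a + T := by
            rw [Finset.sum_insert ha]
          have hmono : T / (ε * m) ≤ (p a + T) / (ε * m) := by
            gcongr
            linarith [hp a]
          rw [hsplit, hsum_insert]
          by_cases hii : i0 = i
          · rw [if_pos hii]
            have hnotmem : a ∉ s.filter (fun j => β j = i) := fun h =>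
              ha (Finset.mem_of_mem_filter a h)
            rw [Finset.sum_insert hnotmem]
            have h1 : (∑ j ∈ s.filter (fun j => β j = i), p j) ≤ T / (ε * m) := by
              rw [← hii]; exact hmin
            have h2 : p a ≤ pmax := hpmax1 a
            calc p a + ∑ j ∈ s.filter (fun j => β j = i), p j
                ≤ pmax + T / (ε * m) := by linarith
              _ ≤ pmax + (p a + T) / (ε * m) := by linarith
          · rw [if_neg hii]
            calc (∑ j ∈ s.filter (fun j => β j = i), p j)
                ≤ pmax + T / (ε * m) := hβload i
              _ ≤ pmax + (p a + T) / (ε * m) := by linarith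
  obtain ⟨β, hβF, hβload⟩ := key Finset.univ
  refine ⟨β, hβF, fun i => ?_⟩
  have hLε : L / ε = (∑ j, p j) / (ε * m) := by
    rw [hL, div_div, mul_comm]
  rw [rload, hLε]
  exact hβload i
end
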